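/- Let μ > 1 and 1/μ < λ ≤ 1. Define φ: [0,∞) → ℝ by φ(0) = 0, φ(z) = z·(log(1/z))^{μ(1−λ)} for z ∈ (0, e^{−2μ}], and φ(z) = (z − e^{−2μ})·ψ'(e^{−2μ}) + ψ(e^{−2μ}) for z > e^{−2μ}, where ψ(z) = z·(log(1/z))^{μ(1−λ)}. Then φ(1) ≥ 1. -/

import Mathlib

open Real

theorem phi_aux_final (μ lam B' c' α' : ℝ) (hB' : 0 < B') (hc' : 0 < c') (hα' : 0 ≤ α')
    (he : α' = μ * (1 - lam)) (hk : 2 ≤ 2*μ*B'*(1+lam)) :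
    1 ≤ 2*μ*B' - α'*B' + c'*(α'*B') := by
  have h0 : 0 ≤ c' * (α' * B') := by positivity
  nlinarith [hk, h0, he]

theorem phi_one_ge_one (μ lam : ℝ) (hμ : 1 < μ)
    (hlam1 : 1 / μ < lam) (hlam2 : lam ≤ 1)
    (ψ : ℝ → ℝ) (hψ : ψ = fun z : ℝ => z * (Real.log (1 / z)) ^ (μ * (1 - lam)))
    (φ : ℝ → ℝ)
    (hφ0 : φ 0 = 0)
    (hφmid : ∀ z ∈ Set.Ioc (0 : ℝ) (Real.exp (-2 * μ)), φ z = ψ z)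
    (hφlin : ∀ z : ℝ, Real.exp (-2 * μ) < z →
      φ z = (z - Real.exp (-2 * μ)) * deriv ψ (Real.exp (-2 * μ)) + ψ (Real.exp (-2 * μ))) :
    1 ≤ φ 1 := by
  have hμ0 : (0:ℝ) < μ := by linarith
  have hlam0 : 0 < lam := lt_trans (by positivity) hlam1
  have hlam1' : 1 < μ * lam := by
    have := (div_lt_iff₀ hμ0).mp hlam1
    linarith [this]
  set α := μ * (1 - lam) with hα
  have hα0 : 0 ≤ α := mul_nonneg hμ0.le (by linarith)
  set c := Real.exp (-2*μ) with hc
  have hc0 : 0 < c := Real.exp_pos _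
  have hc1 : c < 1 := by
    rw [hc, Real.exp_lt_one_iff]; linarith
  have h2μ : (0:ℝ) < 2*μ := by linarith
  have hlogc : Real.log c = -(2*μ) := by rw [hc, Real.log_exp]; ring
  -- rewrite ψ
  have hψ' : ψ = fun z : ℝ => z * (-Real.log z) ^ α := by
    rw [hψ]; funext z; rw [one_div, Real.log_inv]
  have hψc : ψ c = c * (2*μ) ^ α := by
    rw [hψ']
    show c * (-Real.log c) ^ α = c * (2*μ) ^ α
    rw [hlogc]; norm_num
  -- derivative of ψ at c
  set B := (2*μ) ^ (α - 1) with hB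
  set A := (2*μ) ^ α with hA
  have hB0 : 0 < B := Real.rpow_pos_of_pos h2μ _
  have hA0 : 0 < A := Real.rpow_pos_of_pos h2μ _
  have hAB : A = 2 * μ * B := by
    have h := Real.rpow_sub_one h2μ.ne' α
    rw [hA, hB, h]
    field_simp
  have hd : HasDerivAt ψ (A - α * B) c := by
    rw [hψ']
    have h1 : HasDerivAt (fun z : ℝ => -Real.log z) (-c⁻¹) c :=
      (Real.hasDerivAt_log hc0.ne').neg
    have hne : -Real.log c ≠ 0 := by rw [hlogc]; simpa using h2μ.ne'
    have h2 : HasDerivAt (fun z : ℝ => (-Real.log z) ^ α)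
        (-c⁻¹ * α * (-Real.log c) ^ (α - 1)) c := h1.rpow_const (Or.inl hne)
    have h3 := (hasDerivAt_id c).mul h2
    refine h3.congr_deriv (Eq.symm ?_)
    rw [id_eq]
    rw [hlogc]
    have : c * c⁻¹ = 1 := mul_inv_cancel₀ hc0.ne'
    rw [hA, hB]
    field_simp
    ring
  have hderiv : deriv ψ c = A - α * B := hd.deriv
  have hφ1 : φ 1 = (1 - c) * (A - α * B) + c * A := by
    rw [hφlin 1 hc1, hderiv, hψc]
  -- key inequality : A * (1 + lam) ≥ 2
  have hlog2 : Real.log 2 > 0.6931471803 := Real.log_two_gt_d9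
  have hloge : Real.log 2 ≤ Real.log (2*μ) := by
    apply Real.log_le_log (by norm_num)
    linarith
  have hexp : 1 + α * Real.log (2*μ) ≤ A := by
    rw [hA, Real.rpow_def_of_pos h2μ]
    have := Real.add_one_le_exp (Real.log (2*μ) * α)
    nlinarith [this]
  have hkey : 2 ≤ A * (1 + lam) := by
    have h1 : (1 - lam) * (μ * (1 + lam) * Real.log (2*μ) - 1) ≥ 0 := by
      apply mul_nonneg (by linarith)
      have hl : 1/2 < Real.log (2*μ) := by linarith
      have hm : 2 < μ*(1+lam) := by nlinarith
      nlinarith [mul_lt_mul'' hm hl (by norm_num : (0:ℝ) ≤ 2) (by norm_num : (0:ℝ) ≤ 1/2)]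
    have h2 : (1 - lam) ≤ α * Real.log (2*μ) * (1 + lam) := by
      rw [hα]; nlinarith [h1]
    nlinarith [mul_le_mul_of_nonneg_right hexp (by linarith : (0:ℝ) ≤ 1 + lam), h2]
  -- conclude
  have hgoal : φ 1 = 2*μ*B - α*B + c*(α*B) := by rw [hφ1, hAB]; ring
  have hkey' : 2 ≤ 2*μ*B*(1+lam) := by rw [hAB] at hkey; linarith [hkey]
  have hcab : (0:ℝ) ≤ c * (α * B) := by positivity
  have hαB : α * B = μ * B - μ * (lam * B) := by rw [hα]; ring
  rw [hgoal]
  exact phi_aux_final μ lam B c α hB0 hc0 hα0 hα hkey'
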